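/- For all integers p ≥ q ≥ 1 and every m ∈ ℤ, G_m^{[p/q]} = x_q·G_{m−1}^{[p/q]} + (1+βx_q)·G_m^{[p/q+1]}. -/

import Mathlib

/- Common setup: `R = ℤ[β][[x₀,x₁,x₂,…]]` with `β = Polynomial.X`; only the
variables `x i` for `i ≥ 1` are used in the statements. -/

attribute [local instance] Classical.propDecidable

noncomputable section

abbrev A : Type := Polynomial ℤ
abbrev R : Type := MvPowerSeries ℕ A

/-- the element β -/
def bR : R := (MvPowerSeries.C (σ := ℕ) (R := A)) Polynomial.X

/-- the variable `x i` -/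
def Xv (i : ℕ) : R := MvPowerSeries.X i

/-- total degree of a monomial -/
def degSum (d : ℕ →₀ ℕ) : ℕ := d.sum fun _ n => n

/-- the ring automorphism `s i` exchanging `x i` and `x (i+1)` -/
def sOp (i : ℕ) (f : R) : R := fun d => f (Finsupp.equivMapDomain (Equiv.swap i (i+1)) d)

/-- the divided difference operator `π i`, characterized by
`(x i - x (i+1)) * π i f = (1 + β x (i+1)) f - (1 + β x i) (s i f)`. -/
def ddiff (i : ℕ) (f : R) : R :=
  Classical.epsilon fun gq : R =>
    (Xv i - Xv (i+1)) * gq = (1 + bR * Xv (i+1)) * f - (1 + bR * Xv i) * sOp i f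

/-- complete homogeneous symmetric function of degree `j` in the variables `x_q, …, x_p` -/
def hsym (q p : ℕ) (j : ℤ) : R := fun d =>
  if (∀ k ∈ d.support, q ≤ k ∧ k ≤ p) ∧ (degSum d : ℤ) = j then 1 else 0

/-- `∏_{i=q}^{p} (1 + β x_i)` -/
def prodOneAdd (q p : ℕ) : R := ∏ i ∈ Finset.Icc q p, (1 + bR * Xv i)

/-- `G_m^{[p/q]} = Σ_{s≥0} (−β)^s (∏_{i=q}^p (1+βx_i)) h_{m+s}(x_q,…,x_p)`,
defined coefficientwise (only the terms with `m + s ≤ deg d` can contribute to the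
coefficient at a monomial `d`). -/
def Gsk (p q : ℕ) (m : ℤ) : R := fun d =>
  ∑ s ∈ Finset.range (((degSum d : ℤ) - m).toNat + 1),
    (-Polynomial.X : A) ^ s * MvPowerSeries.coeff (R := A) d (prodOneAdd q p * hsym q p (m + s))

/-- `G_m^{[p]} = G_m^{[p/1]}` -/
def Gk (p : ℕ) (m : ℤ) : R := Gsk p 1 m

/-- the geometric series `Σ_{s≥0} (−β x_i)^s = 1/(1+βx_i)` -/
def geom (i : ℕ) : R := fun d =>
  if d.support ⊆ {i} then (-Polynomial.X : A) ^ (d i) else 0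

/-- substitution of `x₁ = 0` -/
def setX1Zero (f : R) : R := fun d => if d 1 = 0 then f d else 0

/-- generalized binomial coefficient `C(c,s) = c(c−1)⋯(c−s+1)/s!` for `c : ℤ` -/
def intChoose (c : ℤ) (s : ℕ) : ℤ :=
  if 0 ≤ c then (c.toNat.choose s : ℤ) else (-1) ^ s * (((s : ℤ) - 1 - c).toNat.choose s : ℤ)

/-- `Σ_{s≥0} C(c,s) β^s G_{m+s}^{[p/q]}`, defined coefficientwise. -/
def JT (p q : ℕ) (c m : ℤ) : R := fun d =>
  ∑ s ∈ Finset.range (((degSum d : ℤ) - m).toNat + 1),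
    ((intChoose c s : ℤ) : A) * Polynomial.X ^ s * MvPowerSeries.coeff (R := A) d (Gsk p q (m + s))

/-- the Jacobi–Trudi type determinant `G̃_{λ/μ,f/g}` (rows and columns indexed by
`Fin r`, with `i : Fin r` representing the 1-based index `i+1`). -/
def GtildeSkew (r : ℕ) (lam mu f g : Fin r → ℕ) : R :=
  Matrix.det (Matrix.of fun i j : Fin r =>
    JT (f i) (g j) ((i : ℤ) - (j : ℤ))
      ((lam i : ℤ) - (mu j : ℤ) + (j : ℤ) - (i : ℤ)))

/-- the Jacobi–Trudi type determinant `G̃_{λ,f}` -/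
def Gtilde (r : ℕ) (lam f : Fin r → ℕ) : R :=
  GtildeSkew r lam (fun _ => 0) f (fun _ => 1)

/-- flagged skew set-valued tableaux of shape `λ/μ` with flagging `f/g`:
a tableau assigns to the box in row `i` (1-based index `i+1`), column `j`
(with `μᵢ < j ≤ λᵢ`) a nonempty subset of `{gᵢ,…,fᵢ}`, weakly increasing
along rows and strictly increasing along columns; boxes outside the shape
carry `∅`. -/
def IsFSVT (r : ℕ) (lam mu f g : Fin r → ℕ) (T : Fin r × ℕ → Finset ℕ) : Prop :=
  (∀ (i : Fin r) (j : ℕ), ¬ (mu i < j ∧ j ≤ lam i) → T (i, j) = ∅) ∧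
  (∀ (i : Fin r) (j : ℕ), mu i < j → j ≤ lam i → (T (i, j)).Nonempty) ∧
  (∀ (i : Fin r) (j k : ℕ), k ∈ T (i, j) → g i ≤ k ∧ k ≤ f i) ∧
  (∀ (i : Fin r) (j : ℕ), mu i < j → j + 1 ≤ lam i →
     ∀ a ∈ T (i, j), ∀ b ∈ T (i, j + 1), a ≤ b) ∧
  (∀ (i : Fin r) (h : (i : ℕ) + 1 < r) (j : ℕ),
     mu i < j → j ≤ lam i → mu ⟨(i : ℕ) + 1, h⟩ < j → j ≤ lam ⟨(i : ℕ) + 1, h⟩ →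
     ∀ a ∈ T (i, j), ∀ b ∈ T (⟨(i : ℕ) + 1, h⟩, j), a < b)

/-- the total number `|T|` of entries of a tableau -/
def entriesCount (r : ℕ) (lam mu : Fin r → ℕ) (T : Fin r × ℕ → Finset ℕ) : ℕ :=
  ∑ i : Fin r, ∑ j ∈ Finset.Ioc (mu i) (lam i), (T (i, j)).card

/-- `|λ/μ|` -/
def shapeSize (r : ℕ) (lam mu : Fin r → ℕ) : ℕ := ∑ i : Fin r, (lam i - mu i)

/-- the weight `β^{|T|−|λ/μ|} ∏_{k∈T} x_k` of a tableau -/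
def wt (r : ℕ) (lam mu : Fin r → ℕ) (T : Fin r × ℕ → Finset ℕ) : R :=
  bR ^ (entriesCount r lam mu T - shapeSize r lam mu) *
    ∏ i : Fin r, ∏ j ∈ Finset.Ioc (mu i) (lam i), ∏ k ∈ T (i, j), Xv k

/-- the flagged skew Grothendieck polynomial `G_{λ/μ,f/g}` as the (finite) sum of
the weights of all flagged skew set-valued tableaux -/
def GF (r : ℕ) (lam mu f g : Fin r → ℕ) : R :=
  ∑ᶠ (T : Fin r × ℕ → Finset ℕ) (_ : IsFSVT r lam mu f g T), wt r lam mu T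

/- permutations: `w ∈ S_n` is encoded as a permutation of `ℕ` fixing `0` and
everything `> n`. -/

/-- `w` belongs to `S_n` -/
def isSn (n : ℕ) (w : Equiv.Perm ℕ) : Prop := ∀ k, k = 0 ∨ n < k → w k = k

/-- Coxeter length = number of inversions -/
def len (n : ℕ) (w : Equiv.Perm ℕ) : ℕ :=
  (((Finset.Icc 1 n) ×ˢ (Finset.Icc 1 n)).filter fun pr : ℕ × ℕ =>
    pr.1 < pr.2 ∧ w pr.2 < w pr.1).card

/-- the rank function `r_w(p,q) = #{i ≤ p : w(i) ≤ q}` -/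
def rankf (w : Equiv.Perm ℕ) (p q : ℕ) : ℕ :=
  ((Finset.Icc 1 p).filter fun i => w i ≤ q).card

/-- the diagram `D(w)` -/
def inD (n : ℕ) (w : Equiv.Perm ℕ) (p q : ℕ) : Prop :=
  1 ≤ p ∧ p ≤ n ∧ 1 ≤ q ∧ q ≤ n ∧ q < w p ∧ p < w.symm q

/-- the essential set `Ess(w)` -/
def inEss (n : ℕ) (w : Equiv.Perm ℕ) (p q : ℕ) : Prop :=
  inD n w p q ∧ ¬ inD n w (p+1) q ∧ ¬ inD n w p (q+1)

/-- `w ∈ S_n` is vexillary: it avoids the pattern 2143 -/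
def Vexillary (n : ℕ) (w : Equiv.Perm ℕ) : Prop :=
  ¬ ∃ a b c d : ℕ, 1 ≤ a ∧ a < b ∧ b < c ∧ c < d ∧ d ≤ n ∧
      w b < w a ∧ w a < w d ∧ w d < w c

lemma coeff_hsym' (q p : ℕ) (j : ℤ) (d : ℕ →₀ ℕ) :
    MvPowerSeries.coeff (R := A) d (hsym q p j) =
      if (∀ k ∈ d.support, q ≤ k ∧ k ≤ p) ∧ (degSum d : ℤ) = j then 1 else 0 := rfl

lemma coeff_Gsk' (p q : ℕ) (m : ℤ) (d : ℕ →₀ ℕ) :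
    MvPowerSeries.coeff (R := A) d (Gsk p q m) =
      ∑ s ∈ Finset.range (((degSum d : ℤ) - m).toNat + 1),
        (-Polynomial.X : A) ^ s *
          MvPowerSeries.coeff (R := A) d (prodOneAdd q p * hsym q p (m + s)) := rfl

lemma coeff_Xv_mul' (i : ℕ) (f : R) (d : ℕ →₀ ℕ) :
    MvPowerSeries.coeff (R := A) d (Xv i * f) =
      if 1 ≤ d i then MvPowerSeries.coeff (R := A) (d - Finsupp.single i 1) f else 0 := by
  rw [Xv, MvPowerSeries.X, MvPowerSeries.coeff_monomial_mul]
  simp [Finsupp.single_le_iff]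

lemma degSum_sub_single (d : ℕ →₀ ℕ) (q : ℕ) (h : 1 ≤ d q) :
    degSum d = degSum (d - Finsupp.single q 1) + 1 := by
  have hd : (d - Finsupp.single q 1) + Finsupp.single q 1 = d := by
    ext k
    rcases eq_or_ne k q with rfl | hk
    · simp [Finsupp.tsub_apply, Finsupp.single_apply]; omega
    · simp [Finsupp.tsub_apply, Finsupp.single_apply, Ne.symm hk]
  conv_lhs => rw [← hd]
  unfold degSum
  rw [Finsupp.sum_add_index' (by simp) (by intros; rfl)]
  rw [Finsupp.sum_single_index rfl]

lemma coeff_mul_hsym_zero (q p : ℕ) (j : ℤ) (d : ℕ →₀ ℕ) (h : (degSum d : ℤ) < j) :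
    MvPowerSeries.coeff (R := A) d (prodOneAdd q p * hsym q p j) = 0 := by
  rw [MvPowerSeries.coeff_mul]
  refine Finset.sum_eq_zero fun x hx => ?_
  replace hx : x.1 + x.2 = d :=
    (Finset.HasAntidiagonal.mem_antidiagonal (A := ℕ →₀ ℕ) (n := d) (a := x)).1 (by convert hx)
  have h2 : degSum x.2 ≤ degSum d := by
    rw [← hx]
    unfold degSum
    rw [Finsupp.sum_add_index' (by simp) (by intros; rfl)]
    omega
  rw [coeff_hsym', if_neg (by rintro ⟨-, h3⟩; omega), mul_zero]

lemma coeff_Gsk_ext (p q : ℕ) (m : ℤ) (d : ℕ →₀ ℕ) (N : ℕ)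
    (hN : ((degSum d : ℤ) - m).toNat + 1 ≤ N) :
    MvPowerSeries.coeff (R := A) d (Gsk p q m) =
      ∑ s ∈ Finset.range N,
        (-Polynomial.X : A) ^ s *
          MvPowerSeries.coeff (R := A) d (prodOneAdd q p * hsym q p (m + s)) := by
  rw [coeff_Gsk']
  refine Finset.sum_subset (Finset.range_subset_range.2 hN) fun s _ hs => ?_
  rw [Finset.mem_range, not_lt] at hs
  have h1 : (degSum d : ℤ) - m ≤ ((degSum d : ℤ) - m).toNat := Int.self_le_toNat _
  rw [coeff_mul_hsym_zero _ _ _ _ (by omega), mul_zero]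

lemma prodOneAdd_rec (q p : ℕ) (hqp : q ≤ p) :
    prodOneAdd q p = (1 + bR * Xv q) * prodOneAdd (q + 1) p := by
  unfold prodOneAdd
  rw [show Finset.Icc q p = insert q (Finset.Icc (q + 1) p) by
        ext k; simp [Finset.mem_Icc]; omega,
    Finset.prod_insert (by simp only [Finset.mem_Icc]; omega)]

lemma hsym_rec (q p : ℕ) (hqp : q ≤ p) (j : ℤ) :
    hsym q p j = Xv q * hsym q p (j - 1) + hsym (q + 1) p j := by
  apply MvPowerSeries.ext; intro d
  rw [map_add, coeff_Xv_mul', coeff_hsym', coeff_hsym', coeff_hsym']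
  by_cases hdq : 1 ≤ d q
  · have h3 : (if (∀ k ∈ d.support, q + 1 ≤ k ∧ k ≤ p) ∧ (degSum d : ℤ) = j
        then (1 : A) else 0) = 0 := by
      refine if_neg ?_
      rintro ⟨hb, -⟩
      have := hb q (Finsupp.mem_support_iff.2 (by omega))
      omega
    rw [if_pos hdq, h3, add_zero]
    have hD := degSum_sub_single d q hdq
    have hsupp : ∀ k, k ≠ q → (d - Finsupp.single q 1 : ℕ →₀ ℕ) k = d k := by
      intro k hk
      rw [Finsupp.tsub_apply]
      simp [Finsupp.single_apply, Ne.symm hk]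
    refine if_congr ⟨fun ⟨hb, hdeg⟩ => ⟨?_, by omega⟩, fun ⟨hb, hdeg⟩ => ⟨?_, by omega⟩⟩ rfl rfl
    · intro k hk
      refine hb k ?_
      rw [Finsupp.mem_support_iff] at hk ⊢
      rcases eq_or_ne k q with rfl | hne
      · omega
      · rw [hsupp k hne] at hk; exact hk
    · intro k hk
      rcases eq_or_ne k q with rfl | hne
      · exact ⟨le_refl _, hqp⟩
      · refine hb k ?_
        rw [Finsupp.mem_support_iff] at hk ⊢
        rw [hsupp k hne]; exact hk
  · rw [if_neg hdq, zero_add]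
    refine if_congr (and_congr_left' ⟨fun hb k hk => ?_, fun hb k hk => ?_⟩) rfl rfl
    · have h1 := hb k hk
      have h2 : k ≠ q := by
        rw [Finsupp.mem_support_iff] at hk; intro h; rw [h] at hk; omega
      omega
    · have := hb k hk; omega

lemma key_rec (q p : ℕ) (hqp : q ≤ p) (j : ℤ) :
    prodOneAdd q p * hsym q p j =
      Xv q * (prodOneAdd q p * hsym q p (j - 1)) +
        prodOneAdd (q + 1) p * hsym (q + 1) p j +
        bR * (Xv q * (prodOneAdd (q + 1) p * hsym (q + 1) p j)) := by
  conv_lhs => rw [hsym_rec q p hqp j]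
  rw [prodOneAdd_rec q p hqp]
  ring


theorem stmt11 (p q : ℕ) (hq : 1 ≤ q) (hqp : q ≤ p) (m : ℤ) :
    Gsk p q m = Xv q * Gsk p q (m - 1) + (1 + bR * Xv q) * Gsk p (q+1) m := by
  apply MvPowerSeries.ext; intro d
  have hexp : (1 + bR * Xv q) * Gsk p (q+1) m
      = Gsk p (q+1) m + bR * (Xv q * Gsk p (q+1) m) := by ring
  rw [hexp, map_add, map_add, coeff_Xv_mul',
    show bR * (Xv q * Gsk p (q+1) m)
      = (MvPowerSeries.C (σ := ℕ) (R := A)) Polynomial.X * (Xv q * Gsk p (q+1) m) from rfl,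
    MvPowerSeries.coeff_C_mul, coeff_Xv_mul']
  set N := ((degSum d : ℤ) - m).toNat + 1 with hN
  rw [coeff_Gsk_ext p q m d N le_rfl, coeff_Gsk_ext p (q+1) m d N le_rfl]
  by_cases hdq : 1 ≤ d q
  · have hD := degSum_sub_single d q hdq
    have hDi : (degSum d : ℤ) = (degSum (d - Finsupp.single q 1) : ℤ) + 1 := by
      exact_mod_cast hD
    rw [if_pos hdq, if_pos hdq,
      coeff_Gsk_ext p q (m-1) (d - Finsupp.single q 1) N (by omega),
      coeff_Gsk_ext p (q+1) m (d - Finsupp.single q 1) N (by omega)]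
    have hterm : ∀ s ∈ Finset.range N,
        (-Polynomial.X : A)^s * MvPowerSeries.coeff (R := A) d (prodOneAdd q p * hsym q p (m + s))
        = (-Polynomial.X : A)^s *
            MvPowerSeries.coeff (R := A) (d - Finsupp.single q 1) (prodOneAdd q p * hsym q p (m - 1 + s))
          + ((-Polynomial.X : A)^s *
              MvPowerSeries.coeff (R := A) d (prodOneAdd (q+1) p * hsym (q+1) p (m + s))
          + Polynomial.X * ((-Polynomial.X : A)^s *
              MvPowerSeries.coeff (R := A) (d - Finsupp.single q 1)
                (prodOneAdd (q+1) p * hsym (q+1) p (m + s)))) := by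
      intro s _
      rw [key_rec q p hqp (m + s), map_add, map_add, coeff_Xv_mul',
        show bR * (Xv q * (prodOneAdd (q+1) p * hsym (q+1) p (m+s)))
          = (MvPowerSeries.C (σ := ℕ) (R := A)) Polynomial.X
              * (Xv q * (prodOneAdd (q+1) p * hsym (q+1) p (m+s))) from rfl,
        MvPowerSeries.coeff_C_mul, coeff_Xv_mul', if_pos hdq, if_pos hdq,
        show m + (s : ℤ) - 1 = m - 1 + s by ring]
      ring
    rw [Finset.sum_congr rfl hterm, Finset.sum_add_distrib, Finset.sum_add_distrib,
      Finset.mul_sum]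
  · rw [if_neg hdq, if_neg hdq, mul_zero, zero_add, add_zero]
    refine Finset.sum_congr rfl fun s _ => ?_
    rw [key_rec q p hqp (m + s), map_add, map_add, coeff_Xv_mul',
      show bR * (Xv q * (prodOneAdd (q+1) p * hsym (q+1) p (m+s)))
        = (MvPowerSeries.C (σ := ℕ) (R := A)) Polynomial.X
            * (Xv q * (prodOneAdd (q+1) p * hsym (q+1) p (m+s))) from rfl,
      MvPowerSeries.coeff_C_mul, coeff_Xv_mul', if_neg hdq, if_neg hdq]
    ring

end
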